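/- For all integers n ≥ 3 and all k ≥ n, sin(π/k)·k/π ≥ cos(π/n); moreover for any Euclidean n-gon with smallest interior angle θ₁, one has sin(θ₁/2) ≤ cos(π/n) ≤ sin(π/k)·k/π, so the upper bound sin(θ₁/2) for its k-th Escobar constant is at most the k-th Escobar constant of the disk. -/

import Mathlib

open Real

theorem ngon_escobar_upper_bound_le_disk (n k : ℕ) (hn : 3 ≤ n) (hk : n ≤ k)
    (θ : Fin n → ℝ) (hpos : ∀ i, 0 < θ i) (hlt : ∀ i, θ i < 2 * π)
    (hsum : ∑ i, θ i = ((n : ℝ) - 2) * π) :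
    Real.sin ((⨅ i, θ i) / 2) ≤ Real.cos (π / n) ∧
      Real.cos (π / n) ≤ Real.sin (π / k) * k / π := by
  have hnR : (3 : ℝ) ≤ n := by exact_mod_cast hn
  have hn0 : (0 : ℝ) < n := by linarith
  have hkR : (n : ℝ) ≤ k := by exact_mod_cast hk
  have hk0 : (0 : ℝ) < k := by linarith
  have hπ := Real.pi_pos
  have hne : Nonempty (Fin n) := ⟨⟨0, by omega⟩⟩
  obtain ⟨j, hj⟩ := exists_eq_ciInf_of_finite (f := θ)
  have hinfpos : 0 < ⨅ i, θ i := hj ▸ hpos j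
  have hinf_le : ∀ i, (⨅ i, θ i) ≤ θ i := fun i =>
    ciInf_le (Set.Finite.bddBelow (Set.finite_range θ)) i
  -- inf ≤ average
  have hsum_ge : (n : ℝ) * (⨅ i, θ i) ≤ ∑ i, θ i := by
    calc (n : ℝ) * (⨅ i, θ i) = ∑ _i : Fin n, (⨅ i, θ i) := by
          simp [Finset.sum_const, mul_comm]
      _ ≤ ∑ i, θ i := Finset.sum_le_sum fun i _ => hinf_le i
  have havg : (⨅ i, θ i) ≤ ((n : ℝ) - 2) * π / n := by
    rw [hsum] at hsum_ge
    rw [le_div_iff₀ hn0]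
    linarith [mul_comm ((n:ℝ) - 2) π]
  have hhalf : (⨅ i, θ i) / 2 ≤ π / 2 - π / n := by
    have : ((n : ℝ) - 2) * π / n = π - 2 * π / n := by field_simp
    rw [this] at havg
    have h2n : (2:ℝ) * π / n = 2 * (π / n) := by ring
    linarith [h2n ▸ havg]
  have hπn_lt : π / n ≤ π / 3 := by
    apply div_le_div_of_nonneg_left hπ.le (by norm_num) hnR
  have hπn_pos : 0 < π / n := div_pos hπ hn0
  have h1 : Real.sin ((⨅ i, θ i) / 2) ≤ Real.cos (π / n) := by
    rw [← Real.sin_pi_div_two_sub (π / n)]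
    apply Real.strictMonoOn_sin.monotoneOn
    · constructor <;> [linarith; linarith]
    · constructor <;> [linarith; linarith]
    · exact hhalf
  refine ⟨h1, ?_⟩
  -- second part
  have hπk_pos : 0 < π / k := div_pos hπ hk0
  have hπk_le : π / k ≤ π / n := div_le_div_of_nonneg_left hπ.le hn0 hkR
  have hπk_lt : π / k < π / 2 := by linarith
  have htan := Real.lt_tan hπk_pos hπk_lt
  have hcos_pos : 0 < Real.cos (π / k) := Real.cos_pos_of_mem_Ioo ⟨by linarith, hπk_lt⟩
  rw [Real.tan_eq_sin_div_cos, lt_div_iff₀ hcos_pos] at htan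
  have h2 : Real.cos (π / n) ≤ Real.cos (π / k) :=
    Real.cos_le_cos_of_nonneg_of_le_pi hπk_pos.le (by linarith) hπk_le
  have h3 : Real.cos (π / k) ≤ Real.sin (π / k) * k / π := by
    rw [le_div_iff₀ hπ]
    have : π / k * Real.cos (π / k) * k = π * Real.cos (π / k) := by
      field_simp
    nlinarith [htan]
  linarith
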